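/- Let N = {1,…,n} be a finite set of buyers, g : 2^N → ℝ monotone submodular with g(∅) = 0, valuations v : N → ℝ with v_i > 0, and budgets B : N → [0,∞]. Define the greedy allocation x* recursively (along the strict total order k ≺ i ⟺ k ∈ H_i) by x*_i := min( B_i / v_i , min_{H ⊆ H_i} ( g(H ∪ {i}) − ∑_{k∈H} x*_k ) ), where B_i / v_i := ∞ if B_i = ∞. Suppose there is a subset V ⊆ N with B_i = ∞ for every i ∈ V and g(V) = g(N). Then all goods are allocated: ∑_{i∈N} x*_i = g(N). (Proposition 2.1, second part; in the paper V is the set of virtual buyers, one per seller, so that g(V) = g(N) and B_i = ∞ on V.) -/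

import Mathlib

open Finset ENNReal

/-- **Proposition 2.1, second part.**  If `V ⊆ N` consists of buyers with
infinite budgets and `g V = g N`, then the greedy allocation `xstar`
allocates all the goods: `∑ i, xstar i = g N`. -/
theorem greedy_allocation_allocates_all_goods
    {n : ℕ} (g : Finset (Fin n) → ℝ)
    (hmono : ∀ S T : Finset (Fin n), S ⊆ T → g S ≤ g T)
    (hsub : ∀ S T : Finset (Fin n), g (S ∩ T) + g (S ∪ T) ≤ g S + g T)
    (hempty : g ∅ = 0)
    (v : Fin n → ℝ) (hv : ∀ i, 0 < v i)
    (B : Fin n → ℝ≥0∞)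
    (H : Fin n → Finset (Fin n))
    (hH : ∀ i k, k ∈ H i ↔ (v i < v k ∨ (v k = v i ∧ k < i)))
    (xstar : Fin n → ℝ)
    (hrec : ∀ i, xstar i =
      if B i = ⊤ then
        (H i).powerset.inf' (Finset.powerset_nonempty _)
          (fun Hs => g (insert i Hs) - ∑ k ∈ Hs, xstar k)
      else
        min ((B i).toReal / v i)
          ((H i).powerset.inf' (Finset.powerset_nonempty _)
            (fun Hs => g (insert i Hs) - ∑ k ∈ Hs, xstar k)))
    (V : Finset (Fin n))
    (hV : ∀ i ∈ V, B i = ⊤)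
    (hgV : g V = g Finset.univ) :
    ∑ i, xstar i = g Finset.univ := by
  classical
  set key : Fin n → ℝ ×ₗ ℕ := fun i => toLex (-v i, (i : ℕ)) with hkey
  -- membership in `H i` in terms of `key`
  have hkeymem : ∀ i k : Fin n, k ∈ H i ↔ key k < key i := by
    intro i k
    rw [hH i k, hkey]
    simp only [Prod.Lex.lt_iff]
    constructor
    · rintro (h | ⟨h1, h2⟩)
      · exact Or.inl (by simpa using h)
      · exact Or.inr ⟨by rw [h1]; rfl, by exact_mod_cast h2⟩
    · rintro (h | ⟨h1, h2⟩)
      · exact Or.inl (by simpa using h)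
      · refine Or.inr ⟨by linarith [neg_injective h1], by exact_mod_cast h2⟩
  have hkeyinj : Function.Injective key := by
    intro a b hab
    have h1 : ((-v a, (a : ℕ)) : ℝ × ℕ) = (-v b, (b : ℕ)) := hab
    exact Fin.ext (by exact_mod_cast congrArg Prod.snd h1)
  -- the candidate bound holds for xstar regardless of the budget case
  have hle : ∀ (i : Fin n) (Hs : Finset (Fin n)), Hs ⊆ H i →
      xstar i ≤ g (insert i Hs) - ∑ k ∈ Hs, xstar k := by
    intro i Hs hHs
    have h1 : (H i).powerset.inf' (Finset.powerset_nonempty _)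
        (fun Hs => g (insert i Hs) - ∑ k ∈ Hs, xstar k)
        ≤ g (insert i Hs) - ∑ k ∈ Hs, xstar k :=
      Finset.inf'_le _ (Finset.mem_powerset.2 hHs)
    rw [hrec i]
    split_ifs with hB
    · exact h1
    · exact le_trans (min_le_right _ _) h1
  -- feasibility: ∑_{k∈S} xstar k ≤ g S
  have feas : ∀ S : Finset (Fin n), ∑ k ∈ S, xstar k ≤ g S := by
    intro S
    rcases S.eq_empty_or_nonempty with rfl | hne
    · simp [hempty]
    · obtain ⟨i, hiS, hmax⟩ := S.exists_max_image key hne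
      have hsubE : S.erase i ⊆ H i := by
        intro k hk
        have hkne : k ≠ i := Finset.ne_of_mem_erase hk
        have hkS : k ∈ S := Finset.mem_of_mem_erase hk
        have : key k < key i :=
          lt_of_le_of_ne (hmax k hkS) (fun h => hkne (hkeyinj h))
        exact (hkeymem i k).2 this
      have h1 := hle i (S.erase i) hsubE
      rw [Finset.insert_erase hiS] at h1
      have h2 : xstar i + ∑ k ∈ S.erase i, xstar k = ∑ k ∈ S, xstar k :=
        Finset.add_sum_erase _ _ hiS
      linarith
  -- nonnegativity
  have nonneg : ∀ i, 0 ≤ xstar i := by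
    intro i
    have hinf : 0 ≤ (H i).powerset.inf' (Finset.powerset_nonempty _)
        (fun Hs => g (insert i Hs) - ∑ k ∈ Hs, xstar k) := by
      apply Finset.le_inf'
      intro Hs _
      have h1 := feas Hs
      have h2 := hmono Hs (insert i Hs) (Finset.subset_insert _ _)
      linarith
    rw [hrec i]
    split_ifs with hB
    · exact hinf
    · exact le_min (div_nonneg ENNReal.toReal_nonneg (hv i).le) hinf
  -- tight sets are closed under union
  have hunion : ∀ S T : Finset (Fin n),
      ∑ k ∈ S, xstar k = g S → ∑ k ∈ T, xstar k = g T →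
      ∑ k ∈ S ∪ T, xstar k = g (S ∪ T) := by
    intro S T hS hT
    have h1 : ∑ k ∈ S ∪ T, xstar k + ∑ k ∈ S ∩ T, xstar k
        = ∑ k ∈ S, xstar k + ∑ k ∈ T, xstar k :=
      Finset.sum_union_inter
    have h2 := feas (S ∩ T)
    have h3 := feas (S ∪ T)
    have h4 := hsub S T
    linarith
  -- each infinite-budget buyer lies in a tight set
  have htight : ∀ i : Fin n, B i = ⊤ →
      ∃ T : Finset (Fin n), i ∈ T ∧ ∑ k ∈ T, xstar k = g T := by
    intro i hB
    obtain ⟨Hs, hHs, heq⟩ := Finset.exists_mem_eq_inf' (Finset.powerset_nonempty (H i))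
      (fun Hs => g (insert i Hs) - ∑ k ∈ Hs, xstar k)
    have hxi : xstar i = g (insert i Hs) - ∑ k ∈ Hs, xstar k := by
      rw [hrec i, if_pos hB]; exact heq
    have hiHs : i ∉ Hs := by
      intro hi
      have := (hH i i).1 ((Finset.mem_powerset.1 hHs) hi)
      rcases this with h | ⟨_, h⟩
      · exact lt_irrefl _ h
      · exact lt_irrefl _ h
    refine ⟨insert i Hs, Finset.mem_insert_self _ _, ?_⟩
    rw [Finset.sum_insert hiHs, hxi]
    ring
  -- a tight set containing any set of infinite-budget buyers
  have hbig : ∀ W : Finset (Fin n), (∀ i ∈ W, B i = ⊤) →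
      ∃ T : Finset (Fin n), W ⊆ T ∧ ∑ k ∈ T, xstar k = g T := by
    intro W
    induction W using Finset.induction with
    | empty => exact fun _ => ⟨∅, Finset.Subset.refl _, by simp [hempty]⟩
    | @insert a W ha ih =>
      intro hW
      obtain ⟨T, hTsub, hT⟩ := ih (fun i hi => hW i (Finset.mem_insert_of_mem hi))
      obtain ⟨Ta, haTa, hTa⟩ := htight a (hW a (Finset.mem_insert_self _ _))
      refine ⟨T ∪ Ta, ?_, hunion _ _ hT hTa⟩
      intro k hk
      rcases Finset.mem_insert.1 hk with rfl | hk
      · exact Finset.mem_union_right _ haTa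
      · exact Finset.mem_union_left _ (hTsub hk)
  obtain ⟨T, hVT, hT⟩ := hbig V hV
  have h1 : g V ≤ g T := hmono _ _ hVT
  have h2 : ∑ k ∈ T, xstar k ≤ ∑ i, xstar i :=
    Finset.sum_le_sum_of_subset_of_nonneg (Finset.subset_univ T)
      (fun i _ _ => nonneg i)
  have h3 := feas Finset.univ
  linarith [hgV]
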